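/- Every dissipative linear map on a Banach space is continuous. -/

import Mathlib

open RCLike Filter Topology

/-- Key estimate: for a dissipative map, `‖x‖ ≤ ‖x - t • R x‖` for `t ≥ 0`. -/
lemma dissipative_key {𝕜 X : Type*} [RCLike 𝕜] [NormedAddCommGroup X]
    [NormedSpace 𝕜 X] (R : X →ₗ[𝕜] X)
    (hdiss : ∀ (x : X) (φ : X →L[𝕜] 𝕜), ‖x‖ = 1 → ‖φ‖ = 1 → φ x = 1 →
      RCLike.re (φ (R x)) ≤ 0) (x : X) (t : ℝ) (ht : 0 ≤ t) :
    ‖x‖ ≤ ‖x - (t : 𝕜) • R x‖ := by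
  rcases eq_or_ne x 0 with rfl | hx
  · simp
  obtain ⟨φ, hφ, hφx⟩ := exists_dual_vector 𝕜 x (norm_ne_zero_iff.mpr hx)
  have hxn : (0 : ℝ) < ‖x‖ := norm_pos_iff.mpr hx
  have h1 : ‖((‖x‖⁻¹ : ℝ) : 𝕜) • x‖ = 1 := by
    rw [norm_smul, RCLike.norm_ofReal, abs_of_nonneg (by positivity)]
    field_simp
  have h2 : φ (((‖x‖⁻¹ : ℝ) : 𝕜) • x) = 1 := by
    rw [map_smul, hφx, smul_eq_mul, ← ofReal_mul, inv_mul_cancel₀ hxn.ne', ofReal_one]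
  have h3 := hdiss _ φ h1 hφ h2
  rw [map_smul, map_smul, smul_eq_mul, re_ofReal_mul] at h3
  have h4 : re (φ (R x)) ≤ 0 := by
    nlinarith [inv_pos.mpr hxn]
  calc ‖x‖ = re (φ (x - (t : 𝕜) • R x)) + t * re (φ (R x)) := by
        rw [map_sub, map_smul, smul_eq_mul, map_sub, re_ofReal_mul, hφx, ofReal_re]
        ring
    _ ≤ re (φ (x - (t : 𝕜) • R x)) := by nlinarith
    _ ≤ ‖φ (x - (t : 𝕜) • R x)‖ := re_le_norm _
    _ ≤ ‖φ‖ * ‖x - (t : 𝕜) • R x‖ := φ.le_opNorm _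
    _ = ‖x - (t : 𝕜) • R x‖ := by rw [hφ, one_mul]

/-- Every dissipative linear map on a Banach space is continuous. -/
theorem dissipative_continuous {𝕜 X : Type*} [RCLike 𝕜] [NormedAddCommGroup X]
    [NormedSpace 𝕜 X] [CompleteSpace X] (R : X →ₗ[𝕜] X)
    (hdiss : ∀ (x : X) (φ : X →L[𝕜] 𝕜), ‖x‖ = 1 → ‖φ‖ = 1 → φ x = 1 →
      RCLike.re (φ (R x)) ≤ 0) :
    Continuous R := by
  apply R.continuous_of_seq_closed_graph
  intro u x y hu hRu
  set v : ℕ → X := fun n => u n - x with hv_def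
  have hv : Tendsto v atTop (𝓝 0) := by
    simpa using hu.sub (tendsto_const_nhds (x := x))
  set w : X := y - R x with hw_def
  have hRv : Tendsto (fun n => R (v n)) atTop (𝓝 w) := by
    have : (fun n => R (v n)) = fun n => R (u n) - R x := by
      ext n; simp [hv_def, map_sub]
    rw [this]
    exact hRu.sub tendsto_const_nhds
  -- step: ∀ z, ∀ t > 0, t * ‖z‖ ≤ t * ‖z - w - t • R z‖
  have step : ∀ (z : X) (t : ℝ), 0 < t → ‖z‖ ≤ ‖z - w - (t : 𝕜) • R z‖ := by
    intro z t ht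
    have key : ∀ n, ‖v n + (t : 𝕜) • z‖ ≤
        ‖(v n + (t : 𝕜) • z) - (t : 𝕜) • (R (v n) + (t : 𝕜) • R z)‖ := by
      intro n
      have := dissipative_key R hdiss (v n + (t : 𝕜) • z) t ht.le
      simpa [map_add, map_smul] using this
    have hL : Tendsto (fun n => ‖v n + (t : 𝕜) • z‖) atTop (𝓝 ‖(0 : X) + (t : 𝕜) • z‖) :=
      (hv.add tendsto_const_nhds).norm
    have hRt : Tendsto (fun n => ‖(v n + (t : 𝕜) • z) - (t : 𝕜) • (R (v n) + (t : 𝕜) • R z)‖)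
        atTop (𝓝 ‖((0 : X) + (t : 𝕜) • z) - (t : 𝕜) • (w + (t : 𝕜) • R z)‖) :=
      ((hv.add tendsto_const_nhds).sub ((hRv.add tendsto_const_nhds).const_smul _)).norm
    have hle : ‖(0 : X) + (t : 𝕜) • z‖ ≤
        ‖((0 : X) + (t : 𝕜) • z) - (t : 𝕜) • (w + (t : 𝕜) • R z)‖ :=
      le_of_tendsto_of_tendsto' hL hRt key
    have hfac : ((0 : X) + (t : 𝕜) • z) - (t : 𝕜) • (w + (t : 𝕜) • R z)
        = (t : 𝕜) • (z - w - (t : 𝕜) • R z) := by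
      clear_value w
      rw [zero_add, smul_sub, smul_add, smul_sub]; abel
    rw [show ‖(0:X) + (t : 𝕜) • z‖ = ‖(t : 𝕜)‖ * ‖z‖ by rw [zero_add, norm_smul],
      hfac, norm_smul, RCLike.norm_ofReal, abs_of_pos ht] at hle
    exact le_of_mul_le_mul_left hle ht
  have hzw : ∀ z : X, ‖z‖ ≤ ‖z - w‖ := by
    intro z
    refine le_of_forall_pos_le_add fun ε hε => ?_
    rcases eq_or_ne (R z) 0 with hRz | hRz
    · have := step z 1 one_pos
      simpa [hRz] using this.trans (le_add_of_nonneg_right hε.le)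
    · set t : ℝ := ε / ‖R z‖ with ht_def
      have ht : 0 < t := div_pos hε (norm_pos_iff.mpr hRz)
      calc ‖z‖ ≤ ‖z - w - (t : 𝕜) • R z‖ := step z t ht
        _ ≤ ‖z - w‖ + ‖(t : 𝕜) • R z‖ := norm_sub_le _ _
        _ = ‖z - w‖ + ε := by
            rw [norm_smul, RCLike.norm_ofReal, abs_of_pos ht, ht_def,
              div_mul_cancel₀ _ (norm_ne_zero_iff.mpr hRz)]
  have hw0 : w = 0 := by
    have := hzw w
    simpa [norm_le_zero_iff] using this
  have : y - R x = 0 := hw0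
  exact sub_eq_zero.mp this
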